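/- For all real numbers a ≥ 0, b > 0, and p > 2, one has min(a, b) ≥ a − ((p−2)^(p−2) · a^(p−1)) / ((p−1)^(p−1) · b^(p−2)). -/

import Mathlib

theorem min_lower_bound (a b p : ℝ) (ha : 0 ≤ a) (hb : 0 < b) (hp : 2 < p) :
    min a b ≥ a - ((p - 2) ^ (p - 2) * a ^ (p - 1)) / ((p - 1) ^ (p - 1) * b ^ (p - 2)) := by
  have hp2 : (0:ℝ) < p - 2 := by linarith
  have hp1 : (0:ℝ) < p - 1 := by linarith
  have hP2 : (0:ℝ) < (p - 2) ^ (p - 2) := Real.rpow_pos_of_pos hp2 _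
  have hP1 : (0:ℝ) < (p - 1) ^ (p - 1) := Real.rpow_pos_of_pos hp1 _
  have hB2 : (0:ℝ) < b ^ (p - 2) := Real.rpow_pos_of_pos hb _
  rcases le_or_gt a b with h | h
  · rw [min_eq_left h]
    have : 0 ≤ ((p - 2) ^ (p - 2) * a ^ (p - 1)) / ((p - 1) ^ (p - 1) * b ^ (p - 2)) := by
      positivity
    linarith
  · rw [min_eq_right h.le]
    rw [ge_iff_le, sub_le_iff_le_add, ← sub_le_iff_le_add']
    rw [le_div_iff₀ (by positivity)]
    have hab : 0 ≤ a - b := by linarith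
    set w₁ : ℝ := 1 / (p - 1) with hw₁def
    set w₂ : ℝ := (p - 2) / (p - 1) with hw₂def
    have hw₁ : 0 ≤ w₁ := by positivity
    have hw₂ : 0 ≤ w₂ := by positivity
    have hsum : w₁ + w₂ = 1 := by rw [hw₁def, hw₂def]; field_simp; ring
    set x : ℝ := (p - 1) * (a - b) with hxdef
    set y : ℝ := ((p - 1) / (p - 2)) * b with hydef
    have hx : 0 ≤ x := by positivity
    have hy : 0 ≤ y := by positivity
    have amgm : x ^ w₁ * y ^ w₂ ≤ w₁ * x + w₂ * y :=
      Real.geom_mean_le_arith_mean2_weighted hw₁ hw₂ hx hy hsum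
    have hrhs : w₁ * x + w₂ * y = a := by
      rw [hxdef, hydef, hw₁def, hw₂def]
      field_simp [hp1.ne', hp2.ne']
      ring
    rw [hrhs] at amgm
    have key : (x ^ w₁ * y ^ w₂) ^ (p - 1) ≤ a ^ (p - 1) :=
      Real.rpow_le_rpow (by positivity) amgm hp1.le
    have hexp : (x ^ w₁ * y ^ w₂) ^ (p - 1) = x * y ^ (p - 2) := by
      rw [Real.mul_rpow (by positivity) (by positivity), ← Real.rpow_mul hx,
        ← Real.rpow_mul hy]
      have e1 : w₁ * (p - 1) = 1 := by rw [hw₁def]; field_simp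
      have e2 : w₂ * (p - 1) = p - 2 := by rw [hw₂def]; field_simp
      rw [e1, e2, Real.rpow_one]
    have hy2 : y ^ (p - 2) = (p - 1) ^ (p - 2) / (p - 2) ^ (p - 2) * b ^ (p - 2) := by
      rw [hydef, Real.mul_rpow (by positivity) hb.le,
        Real.div_rpow hp1.le hp2.le]
    have hfac : (p - 1) * (p - 1) ^ (p - 2) = (p - 1) ^ (p - 1) := by
      nth_rewrite 1 [← Real.rpow_one (p - 1)]
      rw [← Real.rpow_add hp1]
      ring_nf
    have hxy : x * y ^ (p - 2) = (p - 1) ^ (p - 1) / (p - 2) ^ (p - 2) * ((a - b) * b ^ (p - 2)) := by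
      rw [hy2, hxdef, ← hfac]; ring
    rw [hexp, hxy] at key
    have := mul_le_mul_of_nonneg_left key hP2.le
    have hc : (p - 2) ^ (p - 2) * ((p - 1) ^ (p - 1) / (p - 2) ^ (p - 2) * ((a - b) * b ^ (p - 2)))
        = (a - b) * ((p - 1) ^ (p - 1) * b ^ (p - 2)) := by
      field_simp
    rw [hc] at this
    linarith
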